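/- Let $f_i: \mathbb{R}^d \to \mathbb{R}$ be twice continuously differentiable with $\|\nabla f_i(w) - \nabla f_i(u)\| \leq L\|w-u\|$, $\|\nabla^2 f_i(w) - \nabla^2 f_i(u)\| \leq \rho\|w-u\|$ (operator norm), and $\|\nabla f_i(w)\| \leq G$ for all $w,u$. Let $\alpha \geq 0$ and define $F_i^{(b)}(w) = f_i(w - \alpha \nabla f_i(w))$. Then $F_i^{(b)}$ is $L_b$-smooth with $L_b = L(1+\alpha L)^2 + \alpha \rho G$, i.e., $\|\nabla F_i^{(b)}(w) - \nabla F_i^{(b)}(u)\| \leq L_b \|w - u\|$ for all $w, u \in \mathbb{R}^d$. -/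

import Mathlib

lemma comp_sub_comp_decomp {E F G : Type*} [NormedAddCommGroup E] [NormedAddCommGroup F]
    [NormedAddCommGroup G] [NormedSpace ℝ E] [NormedSpace ℝ F] [NormedSpace ℝ G]
    (A1 A2 : F →L[ℝ] G) (B1 B2 : E →L[ℝ] F) :
    A1.comp B1 - A2.comp B2 = (A1 - A2).comp B1 + A2.comp (B1 - B2) := by
  ext x
  simp only [ContinuousLinearMap.sub_apply, ContinuousLinearMap.add_apply,
    ContinuousLinearMap.coe_comp', Function.comp_apply, ContinuousLinearMap.sub_apply, map_sub]
  abel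

set_option maxHeartbeats 1000000 in
theorem stmt_10 (d : ℕ) (f : EuclideanSpace ℝ (Fin d) → ℝ) (L ρ G α : ℝ)
    (hC2 : ContDiff ℝ 2 f)
    (hsmooth : ∀ w u, ‖gradient f w - gradient f u‖ ≤ L * ‖w - u‖)
    (hhessLip : ∀ w u, ‖fderiv ℝ (gradient f) w - fderiv ℝ (gradient f) u‖ ≤ ρ * ‖w - u‖)
    (hgradbdd : ∀ w, ‖gradient f w‖ ≤ G)
    (hα : 0 ≤ α)
    (F : EuclideanSpace ℝ (Fin d) → ℝ)
    (hF : ∀ w, F w = f (w - α • gradient f w))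
    (w u : EuclideanSpace ℝ (Fin d)) :
    ‖gradient F w - gradient F u‖ ≤ (L * (1 + α * L) ^ 2 + α * ρ * G) * ‖w - u‖ := by
  by_cases hwu : w = u
  · subst hwu; simp
  have hnorm_pos : (0:ℝ) < ‖w - u‖ := by
    rw [norm_pos_iff]; exact sub_ne_zero.mpr hwu
  set g := gradient f with hg
  -- nonnegativity of constants
  have hL : 0 ≤ L := by nlinarith [hsmooth w u, norm_nonneg (g w - g u)]
  have hρ : 0 ≤ ρ := by
    nlinarith [hhessLip w u, norm_nonneg (fderiv ℝ g w - fderiv ℝ g u)]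
  have hG : 0 ≤ G := le_trans (norm_nonneg _) (hgradbdd w)
  have hf_diff : Differentiable ℝ f := hC2.differentiable (by norm_num)
  -- gradient and fderiv translation
  have hfdef : ∀ x, fderiv ℝ f x = InnerProductSpace.toDual ℝ (EuclideanSpace ℝ (Fin d)) (g x) := by
    intro x
    simp [hg, gradient]
  -- differentiability of g
  have hdf_cd : ContDiff ℝ 1 (fderiv ℝ f) := hC2.fderiv_right (by norm_num)
  have hg_cd : ContDiff ℝ 1 g := by
    have : g = fun x => (InnerProductSpace.toDual ℝ (EuclideanSpace ℝ (Fin d))).symm (fderiv ℝ f x) := rfl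
    rw [this]
    exact (InnerProductSpace.toDual ℝ (EuclideanSpace ℝ (Fin d))).symm.contDiff.comp hdf_cd
  have hg_diff : Differentiable ℝ g := hg_cd.differentiable (by norm_num)
  set H := fun x => fderiv ℝ g x with hH
  -- Lipschitz of g, bound on H
  have hg_lip : LipschitzWith ⟨L, hL⟩ g := by
    apply LipschitzWith.of_dist_le_mul
    intro x y
    rw [dist_eq_norm, dist_eq_norm]; exact hsmooth x y
  have hH_norm : ∀ x, ‖H x‖ ≤ L := fun x => norm_fderiv_le_of_lipschitz ℝ hg_lip
  -- the inner map
  set φ := fun x : EuclideanSpace ℝ (Fin d) => x - α • g x with hφ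
  set B := fun x : EuclideanSpace ℝ (Fin d) => ContinuousLinearMap.id ℝ (EuclideanSpace ℝ (Fin d)) - α • H x with hB
  have hφ' : ∀ x, HasFDerivAt φ (B x) x := by
    intro x
    exact (hasFDerivAt_id x).sub (((hg_diff x).hasFDerivAt).const_smul α)
  set A := fun x : EuclideanSpace ℝ (Fin d) => fderiv ℝ f (φ x) with hA
  have hF' : ∀ x, HasFDerivAt F ((A x).comp (B x)) x := by
    intro x
    have hFeq : F = fun x => f (φ x) := funext hF
    rw [hFeq]
    exact ((hf_diff (φ x)).hasFDerivAt).comp x (hφ' x)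
  have hgradF : ∀ x, gradient F x =
      (InnerProductSpace.toDual ℝ (EuclideanSpace ℝ (Fin d))).symm ((A x).comp (B x)) := by
    intro x
    rw [gradient, (hF' x).fderiv]
  -- reduce to operator norms
  have hkey : ‖gradient F w - gradient F u‖ = ‖(A w).comp (B w) - (A u).comp (B u)‖ := by
    rw [hgradF w, hgradF u, ← LinearIsometryEquiv.map_sub, LinearIsometryEquiv.norm_map]
  rw [hkey]
  have hdecomp : (A w).comp (B w) - (A u).comp (B u)
      = (A w - A u).comp (B w) + (A u).comp (B w - B u) := by
    exact comp_sub_comp_decomp _ _ _ _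
  -- individual bounds
  have hφ_lip : ‖φ w - φ u‖ ≤ (1 + α * L) * ‖w - u‖ := by
    have : φ w - φ u = (w - u) - α • (g w - g u) := by
      simp only [hφ, smul_sub]; abel
    rw [this]
    calc ‖(w - u) - α • (g w - g u)‖ ≤ ‖w - u‖ + ‖α • (g w - g u)‖ := norm_sub_le _ _
      _ = ‖w - u‖ + α * ‖g w - g u‖ := by rw [norm_smul, Real.norm_of_nonneg hα]
      _ ≤ ‖w - u‖ + α * (L * ‖w - u‖) := by
          have := hsmooth w u
          nlinarith
      _ = (1 + α * L) * ‖w - u‖ := by ring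
  have hAdiff : ‖A w - A u‖ ≤ L * ((1 + α * L) * ‖w - u‖) := by
    have h1 : A w - A u = InnerProductSpace.toDual ℝ (EuclideanSpace ℝ (Fin d)) (g (φ w) - g (φ u)) := by
      show fderiv ℝ f (φ w) - fderiv ℝ f (φ u) = _
      rw [hfdef, hfdef, ← map_sub]
    rw [h1, LinearIsometryEquiv.norm_map]
    calc ‖g (φ w) - g (φ u)‖ ≤ L * ‖φ w - φ u‖ := hsmooth _ _
      _ ≤ L * ((1 + α * L) * ‖w - u‖) := by nlinarith [hφ_lip]
  have hBw : ‖B w‖ ≤ 1 + α * L := by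
    calc ‖B w‖ ≤ ‖ContinuousLinearMap.id ℝ (EuclideanSpace ℝ (Fin d))‖ + ‖α • H w‖ := norm_sub_le _ _
      _ ≤ 1 + α * L := by
          have h1 : ‖α • H w‖ = α * ‖H w‖ := by rw [norm_smul, Real.norm_of_nonneg hα]
          have := hH_norm w
          have h2 : ‖ContinuousLinearMap.id ℝ (EuclideanSpace ℝ (Fin d))‖ ≤ 1 :=
            ContinuousLinearMap.norm_id_le
          nlinarith
  have hBdiff : ‖B w - B u‖ ≤ α * (ρ * ‖w - u‖) := by
    have h1 : B w - B u = α • (H u - H w) := by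
      simp only [hB, smul_sub]; abel
    rw [h1]
    have h2 : ‖α • (H u - H w)‖ = α * ‖H u - H w‖ := by
      rw [norm_smul, Real.norm_of_nonneg hα]
    rw [h2, norm_sub_rev]
    have := hhessLip w u
    nlinarith
  have hAu : ‖A u‖ ≤ G := by
    show ‖fderiv ℝ f (φ u)‖ ≤ G
    rw [hfdef, LinearIsometryEquiv.norm_map]
    exact hgradbdd _
  calc ‖(A w).comp (B w) - (A u).comp (B u)‖
      = ‖(A w - A u).comp (B w) + (A u).comp (B w - B u)‖ := by rw [hdecomp]
    _ ≤ ‖(A w - A u).comp (B w)‖ + ‖(A u).comp (B w - B u)‖ := norm_add_le _ _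
    _ ≤ ‖A w - A u‖ * ‖B w‖ + ‖A u‖ * ‖B w - B u‖ := by
        gcongr <;> exact ContinuousLinearMap.opNorm_comp_le _ _
    _ ≤ (L * (1 + α * L) ^ 2 + α * ρ * G) * ‖w - u‖ := by
        have h1 : 0 ≤ ‖B w‖ := norm_nonneg _
        have h2 : 0 ≤ ‖A w - A u‖ := norm_nonneg _
        have h3 : 0 ≤ ‖A u‖ := norm_nonneg _
        have h4 : 0 ≤ ‖B w - B u‖ := norm_nonneg _
        nlinarith [mul_le_mul hAdiff hBw h1 (by positivity : (0:ℝ) ≤ L * ((1 + α * L) * ‖w - u‖)),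
          mul_le_mul hAu hBdiff h4 hG]
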